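/- Let n be an even positive integer, p ≥ 1, suppose Assumption D holds, and let (D_1,...,D_n) be uniformly distributed on the set {d ∈ {0,1}^n : Σ_{i=1}^n d_i = n/2} and independent of (X_1,...,X_n) (complete randomization). Then (C̲/3)·(p/n) ≤ E[||B_{n,p}(X)||²] ≤ (C̄/3)·(p/n). -/

import Mathlib

open MeasureTheory ProbabilityTheory
open scoped ENNReal NNReal

/-! Auxiliary lemmas -/

noncomputable def crFj (p : ℕ) (k : Fin p) (c : ℝ) (j : Fin p) : ℝ → ℝ :=
  fun t => (Set.Icc (0:ℝ) 1).indicator (fun t => if j = k then (t - c)^2 else 1) t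

theorem crFj_int (p : ℕ) (k : Fin p) (c : ℝ) (j : Fin p) : Integrable (crFj p k c j) := by
  apply IntegrableOn.integrable_indicator _ measurableSet_Icc
  apply Continuous.integrableOn_Icc
  rcases eq_or_ne j k with h | h <;> simp [h] <;> fun_prop

theorem cr_cube_int (p : ℕ) (k : Fin p) (c : ℝ) :
    ∫ x : EuclideanSpace ℝ (Fin p), ∏ j, crFj p k c j (x j) = 1/3 - c + c^2 := by
  have hmp := (EuclideanSpace.volume_preserving_symm_measurableEquiv_toLp (Fin p)).symm
  rw [← hmp.integral_comp']
  have : ∀ x : Fin p → ℝ, (∏ j, crFj p k c j (((MeasurableEquiv.toLp 2 (Fin p → ℝ)).symm.symm x) j))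
      = ∏ j, crFj p k c j (x j) := fun x => rfl
  simp_rw [this]
  rw [MeasureTheory.integral_fintype_prod_volume_eq_prod (crFj p k c)]
  rw [← Finset.prod_erase_mul _ _ (Finset.mem_univ k)]
  have h1 : ∫ t : ℝ, crFj p k c k t = 1/3 - c + c^2 := by
    unfold crFj
    simp only [if_pos rfl]
    rw [integral_indicator measurableSet_Icc, integral_Icc_eq_integral_Ioc,
      ← intervalIntegral.integral_of_le (by norm_num : (0:ℝ) ≤ 1)]
    simp only [if_true]
    rw [intervalIntegral.integral_comp_sub_right (fun u => u^2) c, integral_pow]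
    ring
  have h2 : ∀ j ∈ Finset.univ.erase k, (∫ t : ℝ, crFj p k c j t) = 1 := by
    intro j hj
    have hjk : j ≠ k := (Finset.mem_erase.1 hj).1
    simp only [crFj, hjk, if_false]
    rw [integral_indicator measurableSet_Icc]
    simp
  rw [Finset.prod_congr rfl h2, h1]
  simp

theorem cr_moment_bounds (p : ℕ) (Clo Chi : ℝ) (hClo : 0 < Clo)
    (f : EuclideanSpace ℝ (Fin p) → ℝ) (hfmeas : Measurable f)
    (hfsupp : ∀ x : EuclideanSpace ℝ (Fin p),
      ¬ (∀ k, x k ∈ Set.Icc (0 : ℝ) 1) → f x = 0)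
    (hfbound : ∀ x : EuclideanSpace ℝ (Fin p),
      (∀ k, x k ∈ Set.Icc (0 : ℝ) 1) → Clo ≤ f x ∧ f x ≤ Chi)
    (k : Fin p) (c : ℝ) :
    Clo * (1/3 - c + c^2) ≤
      (∫ x, (x k - c)^2 ∂(volume.withDensity (fun x => ENNReal.ofReal (f x)))) ∧
    (∫ x, (x k - c)^2 ∂(volume.withDensity (fun x => ENNReal.ofReal (f x)))) ≤
      Chi * (1/3 - c + c^2) := by
  have fnn : ∀ x, 0 ≤ f x := by
    intro x
    by_cases h : ∀ k, x k ∈ Set.Icc (0:ℝ) 1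
    · exact le_trans hClo.le (hfbound x h).1
    · rw [hfsupp x h]
  have hid : (∫ x, (x k - c)^2 ∂(volume.withDensity (fun x => ENNReal.ofReal (f x))))
      = ∫ x : EuclideanSpace ℝ (Fin p), f x * (x k - c)^2 := by
    have : (fun x : EuclideanSpace ℝ (Fin p) => ENNReal.ofReal (f x))
        = fun x => ((f x).toNNReal : ℝ≥0∞) := rfl
    rw [this, integral_withDensity_eq_integral_smul hfmeas.real_toNNReal]
    congr 1; funext x
    rw [NNReal.smul_def, Real.coe_toNNReal _ (fnn x), smul_eq_mul]
  set G : EuclideanSpace ℝ (Fin p) → ℝ := fun x => ∏ j, crFj p k c j (x j) with hG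
  have hGint : Integrable G := by
    have h1 : Integrable (fun x : Fin p → ℝ => ∏ j, crFj p k c j (x j)) :=
      Integrable.fintype_prod (fun j => crFj_int p k c j)
    have hmp := (EuclideanSpace.volume_preserving_symm_measurableEquiv_toLp (Fin p))
    have h2 := (hmp.integrable_comp_emb
      (MeasurableEquiv.toLp 2 (Fin p → ℝ)).symm.measurableEmbedding).2 h1
    exact h2
  have hGnn : ∀ x, 0 ≤ G x := by
    intro x; apply Finset.prod_nonneg; intro j _
    apply Set.indicator_nonneg; intro t _; positivity
  have hcube : ∀ x : EuclideanSpace ℝ (Fin p), (∀ k, x k ∈ Set.Icc (0:ℝ) 1) →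
      G x = (x k - c)^2 := by
    intro x hx
    rw [hG]
    have : ∀ j : Fin p, crFj p k c j (x j) = if j = k then (x j - c)^2 else 1 := by
      intro j; unfold crFj; rw [Set.indicator_of_mem (hx j)]
    simp only [this]
    simp
  have hcube0 : ∀ x : EuclideanSpace ℝ (Fin p), ¬(∀ k, x k ∈ Set.Icc (0:ℝ) 1) →
      G x = 0 := by
    intro x hx
    push_neg at hx
    obtain ⟨j, hj⟩ := hx
    exact Finset.prod_eq_zero (Finset.mem_univ j) (Set.indicator_of_notMem hj _)
  have hub : ∀ x, f x * (x k - c)^2 ≤ Chi * G x := by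
    intro x
    by_cases h : ∀ k, x k ∈ Set.Icc (0:ℝ) 1
    · rw [hcube x h]
      exact mul_le_mul_of_nonneg_right (hfbound x h).2 (by positivity)
    · rw [hfsupp x h, hcube0 x h]; simp
  have hlb : ∀ x, Clo * G x ≤ f x * (x k - c)^2 := by
    intro x
    by_cases h : ∀ k, x k ∈ Set.Icc (0:ℝ) 1
    · rw [hcube x h]
      exact mul_le_mul_of_nonneg_right (hfbound x h).1 (by positivity)
    · rw [hcube0 x h, hfsupp x h]; simp
  have hmeas2 : Measurable (fun x : EuclideanSpace ℝ (Fin p) => f x * (x k - c)^2) :=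
    hfmeas.mul ((((measurable_pi_apply k).comp (WithLp.measurable_ofLp 2 _)).sub measurable_const).pow measurable_const)
  have hint2 : Integrable (fun x : EuclideanSpace ℝ (Fin p) => f x * (x k - c)^2) := by
    apply Integrable.mono' (hGint.const_mul Chi) hmeas2.aestronglyMeasurable
    filter_upwards with x
    rw [Real.norm_eq_abs, abs_of_nonneg (mul_nonneg (fnn x) (by positivity))]
    exact hub x
  constructor
  · rw [hid, ← cr_cube_int p k c, ← integral_const_mul]
    exact integral_mono (hGint.const_mul Clo) hint2 hlb
  · rw [hid, ← cr_cube_int p k c, ← integral_const_mul]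
    exact integral_mono hint2 (hGint.const_mul Chi) hub

theorem cr_cube_meas (p : ℕ) :
    MeasurableSet {x : EuclideanSpace ℝ (Fin p) | ∀ k, x k ∈ Set.Icc (0:ℝ) 1} := by
  rw [Set.setOf_forall]
  exact MeasurableSet.iInter fun k => ((measurable_pi_apply k).comp (WithLp.measurable_ofLp 2 _)) measurableSet_Icc

theorem cr_nu_compl (p : ℕ) (f : EuclideanSpace ℝ (Fin p) → ℝ)
    (hfsupp : ∀ x : EuclideanSpace ℝ (Fin p),
      ¬ (∀ k, x k ∈ Set.Icc (0 : ℝ) 1) → f x = 0) :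
    (volume.withDensity (fun x => ENNReal.ofReal (f x)))
      {x : EuclideanSpace ℝ (Fin p) | ∀ k, x k ∈ Set.Icc (0:ℝ) 1}ᶜ = 0 := by
  rw [withDensity_apply _ (cr_cube_meas p).compl]
  rw [setLIntegral_congr_fun (cr_cube_meas p).compl
    (fun x (hx : ¬ _) => by rw [hfsupp x hx, ENNReal.ofReal_zero])]
  simp

theorem cr_coord_sum (n p : ℕ) (a : Fin n → ℝ) (v : Fin n → EuclideanSpace ℝ (Fin p)) (k : Fin p) :
    (∑ i, a i • v i) k = ∑ i, a i * v i k := by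
  induction (Finset.univ : Finset (Fin n)) using Finset.induction with
  | empty => simp
  | insert _ _ h ih => rw [Finset.sum_insert h, Finset.sum_insert h, ← ih]; rfl

theorem cr_normsq (p : ℕ) (v : EuclideanSpace ℝ (Fin p)) : ‖v‖^2 = ∑ k, (v k)^2 := by
  rw [EuclideanSpace.norm_eq, Real.sq_sqrt (by positivity)]
  simp [sq_abs]

theorem cr_sum_zero (n : ℕ) (hneven : Even n) (d : Fin n → Bool)
    (hd : (Finset.univ.filter (fun i => d i = true)).card = n / 2) :
    ∑ i, (2 * (if d i then (1:ℝ) else 0) - 1) = 0 := by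
  have h1 : ∑ i, (if d i then (1:ℝ) else 0)
      = ((Finset.univ.filter (fun i => d i = true)).card : ℝ) := by
    simp [Finset.sum_boole]
  rw [Finset.sum_sub_distrib, ← Finset.mul_sum, h1, hd]
  simp only [Finset.sum_const, Finset.card_univ, Fintype.card_fin, nsmul_eq_mul, mul_one]
  have h2 : ((n / 2 : ℕ) : ℝ) * 2 = n := by exact_mod_cast Nat.div_mul_cancel hneven.two_dvd
  linarith

theorem cr_G_meas (n : ℕ) :
    MeasurableSet {v : Fin n → ℝ | (∀ i, v i = 0 ∨ v i = 1) ∧ ∑ i, (2 * v i - 1) = 0} := by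
  have h1 : MeasurableSet {v : Fin n → ℝ | ∀ i, v i = 0 ∨ v i = 1} := by
    rw [Set.setOf_forall]
    exact MeasurableSet.iInter fun i => (measurable_pi_apply i)
      ((measurableSet_singleton 0).union (measurableSet_singleton 1))
  have h2 : MeasurableSet {v : Fin n → ℝ | ∑ i, (2 * v i - 1) = 0} :=
    measurableSet_eq_fun (by fun_prop) measurable_const
  exact h1.inter h2

set_option maxHeartbeats 1600000 in
/-- Under Assumption D (i.i.d. covariates with a density `f` supported on
`[0,1]^p`, bounded between `Clo` and `Chi` there) and complete randomization
(the vector `(D₁,…,Dₙ)` is uniform on allocations in `{0,1}ⁿ` with exactly `n/2` ones,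
independent of the covariates), `(Clo/3)(p/n) ≤ E‖B‖² ≤ (Chi/3)(p/n)`. -/
theorem complete_randomization_imbalance_bounds
    {Ω : Type*} [MeasurableSpace Ω] (P : Measure Ω) [IsProbabilityMeasure P]
    (n p : ℕ) (hn : 0 < n) (hneven : Even n) (hp : 0 < p)
    (X : Fin n → Ω → EuclideanSpace ℝ (Fin p)) (D : Fin n → Ω → ℝ)
    (Clo Chi : ℝ) (hClo : 0 < Clo) (hCloChi : Clo ≤ Chi)
    (f : EuclideanSpace ℝ (Fin p) → ℝ) (hfmeas : Measurable f)
    (hXmeas : ∀ i, Measurable (X i))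
    (hXindep : iIndepFun X P)
    (hXlaw : ∀ i, Measure.map (X i) P
      = volume.withDensity (fun x => ENNReal.ofReal (f x)))
    (hfsupp : ∀ x : EuclideanSpace ℝ (Fin p),
      ¬ (∀ k, x k ∈ Set.Icc (0 : ℝ) 1) → f x = 0)
    (hfbound : ∀ x : EuclideanSpace ℝ (Fin p),
      (∀ k, x k ∈ Set.Icc (0 : ℝ) 1) → Clo ≤ f x ∧ f x ≤ Chi)
    (hDmeas : ∀ i, Measurable (D i))
    (hDlaw : Measure.map (fun ω (i : Fin n) => D i ω) P
      = (((Finset.univ.filter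
            (fun d : Fin n → Bool =>
              (Finset.univ.filter (fun i => d i = true)).card = n / 2)).card : ENNReal))⁻¹
        • ∑ d ∈ Finset.univ.filter
            (fun d : Fin n → Bool =>
              (Finset.univ.filter (fun i => d i = true)).card = n / 2),
            Measure.dirac (fun i => if d i then (1 : ℝ) else 0))
    (hDX : IndepFun (fun ω (i : Fin n) => D i ω) (fun ω (i : Fin n) => X i ω) P) :
    (Clo / 3) * ((p : ℝ) / n)
        ≤ ∫ ω, ‖(2 / (n : ℝ)) • ∑ i, (2 * D i ω - 1) • X i ω‖ ^ 2 ∂P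
      ∧ ∫ ω, ‖(2 / (n : ℝ)) • ∑ i, (2 * D i ω - 1) • X i ω‖ ^ 2 ∂P
        ≤ (Chi / 3) * ((p : ℝ) / n) := by
  classical
  have i0 : Fin n := ⟨0, hn⟩
  set ν : Measure (EuclideanSpace ℝ (Fin p)) :=
    volume.withDensity (fun x => ENNReal.ofReal (f x)) with hνdef
  have hνprob : IsProbabilityMeasure ν := by
    have h := Measure.isProbabilityMeasure_map (μ := P) (f := X i0) (hXmeas i0).aemeasurable
    rwa [hXlaw i0] at h
  have haecube : ∀ᵐ x ∂ν, ∀ k, x k ∈ Set.Icc (0:ℝ) 1 := by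
    rw [ae_iff]
    have : {x : EuclideanSpace ℝ (Fin p) | ¬ ∀ k, x k ∈ Set.Icc (0:ℝ) 1}
        = {x : EuclideanSpace ℝ (Fin p) | ∀ k, x k ∈ Set.Icc (0:ℝ) 1}ᶜ := rfl
    rw [this]
    exact cr_nu_compl p f hfsupp
  have hφmeas : ∀ k : Fin p, Measurable fun x : EuclideanSpace ℝ (Fin p) => x k :=
    fun k => (measurable_pi_apply k).comp (WithLp.measurable_ofLp 2 _)
  have hbound1 : ∀ k, ∀ᵐ x ∂ν, ‖x k‖ ≤ 1 := fun k => haecube.mono (fun x hx => by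
    rw [Real.norm_eq_abs, abs_le]
    exact ⟨by linarith [(hx k).1], (hx k).2⟩)
  have hint1 : ∀ k, Integrable (fun x => x k) ν := fun k =>
    Integrable.mono' (integrable_const 1) (hφmeas k).aestronglyMeasurable (hbound1 k)
  set c : Fin p → ℝ := fun k => ∫ x, x k ∂ν with hc
  have hint2 : ∀ (k : Fin p) (a : ℝ), Integrable (fun x => (x k - a)^2) ν := by
    intro k a
    apply Integrable.mono' (integrable_const ((1+|a|)^2))
      (((hφmeas k).sub measurable_const).pow measurable_const).aestronglyMeasurable
    filter_upwards [hbound1 k] with x hx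
    rw [Real.norm_eq_abs, abs_of_nonneg (sq_nonneg _)]
    have h1 : |x k - a| ≤ 1 + |a| := by
      calc |x k - a| ≤ |x k| + |a| := abs_sub _ _
        _ ≤ 1 + |a| := by rw [Real.norm_eq_abs] at hx; linarith
    show (x k - a)^2 ≤ (1+|a|)^2
    nlinarith [abs_nonneg (x k - a), sq_abs (x k - a), abs_nonneg a]
  set V : Fin p → ℝ := fun k => ∫ x, (x k - c k)^2 ∂ν with hV
  -- variance bounds
  have hVlb : ∀ k, Clo / 12 ≤ V k := by
    intro k
    have h := (cr_moment_bounds p Clo Chi hClo f hfmeas hfsupp hfbound k (c k)).1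
    have h2 : Clo / 12 ≤ Clo * (1/3 - c k + (c k)^2) := by nlinarith [sq_nonneg (c k - 1/2)]
    exact h2.trans h
  have hVub : ∀ k, V k ≤ Chi / 12 := by
    intro k
    have hintsq : Integrable (fun x => (x k)^2) ν := by
      have := hint2 k 0; simpa using this
    have hexp : ∀ a : ℝ, ∫ x, (x k - a)^2 ∂ν = (∫ x, (x k)^2 ∂ν) - 2*a*(c k) + a^2 := by
      intro a
      have hrw : (fun x : EuclideanSpace ℝ (Fin p) => (x k - a)^2)
          = fun x => ((x k)^2 - (2*a) * (x k)) + a^2 := by funext x; ring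
      have hA : Integrable (fun x : EuclideanSpace ℝ (Fin p) => (x k)^2 - (2*a) * (x k)) ν :=
        hintsq.sub ((hint1 k).const_mul (2*a))
      rw [hrw, integral_add hA (integrable_const _),
        integral_sub hintsq ((hint1 k).const_mul (2*a)), integral_const_mul, integral_const]
      simp only [measure_univ, probReal_univ, ENNReal.toReal_one, smul_eq_mul, one_mul]
      rfl
    have h := (cr_moment_bounds p Clo Chi hClo f hfmeas hfsupp hfbound k (1/2)).2
    rw [← hνdef] at h
    have e : Chi * (1/3 - 1/2 + (1/2:ℝ)^2) = Chi / 12 := by ring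
    have h1 : ∫ x, (x k - (1/2:ℝ))^2 ∂ν ≤ Chi / 12 := by rw [← e]; exact h
    have h2 := hexp (c k)
    have h3 := hexp (1/2)
    show (∫ x, (x k - c k)^2 ∂ν) ≤ Chi / 12
    nlinarith [sq_nonneg (c k - 1/2)]
  -- probability side
  set DV : Ω → (Fin n → ℝ) := fun ω i => D i ω with hDV
  set XV : Ω → (Fin n → EuclideanSpace ℝ (Fin p)) := fun ω i => X i ω with hXV
  have hDVmeas : Measurable DV := measurable_pi_lambda _ hDmeas
  have hXVmeas : Measurable XV := measurable_pi_lambda _ hXmeas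
  -- good events
  have hDae : ∀ᵐ ω ∂P, (∀ i, D i ω = 0 ∨ D i ω = 1) ∧ ∑ i, (2 * D i ω - 1) = 0 := by
    set G : Set (Fin n → ℝ) :=
      {v | (∀ i, v i = 0 ∨ v i = 1) ∧ ∑ i, (2 * v i - 1) = 0} with hG
    have hGmeas : MeasurableSet G := cr_G_meas n
    have hmap0 : Measure.map DV P Gᶜ = 0 := by
      rw [hDlaw, Measure.smul_apply, Measure.finset_sum_apply]
      have hz : ∀ d ∈ Finset.univ.filter
          (fun d : Fin n → Bool => (Finset.univ.filter (fun i => d i = true)).card = n / 2),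
          Measure.dirac (fun i => if d i then (1:ℝ) else 0) Gᶜ = 0 := by
        intro d hd
        rw [Measure.dirac_apply' _ hGmeas.compl]
        have hpt : (fun i => if d i then (1:ℝ) else 0) ∈ G := by
          constructor
          · intro i; by_cases h : d i <;> simp [h]
          · exact cr_sum_zero n hneven d (Finset.mem_filter.1 hd).2
        simp [Set.indicator_of_notMem, hpt]
      rw [Finset.sum_eq_zero hz]
      simp
    have hP0 : P (DV ⁻¹' Gᶜ) = 0 := by
      rw [← Measure.map_apply hDVmeas hGmeas.compl]; exact hmap0
    have : ∀ᵐ ω ∂P, DV ω ∈ G := by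
      rw [ae_iff]
      convert hP0 using 2
      rfl
    exact this.mono (fun ω hω => hω)
  have hXae : ∀ᵐ ω ∂P, ∀ (i : Fin n) (k : Fin p), X i ω k ∈ Set.Icc (0:ℝ) 1 := by
    rw [ae_all_iff]
    intro i
    have h0 : Measure.map (X i) P
        {x : EuclideanSpace ℝ (Fin p) | ∀ k, x k ∈ Set.Icc (0:ℝ) 1}ᶜ = 0 := by
      rw [hXlaw i]; exact cr_nu_compl p f hfsupp
    rw [Measure.map_apply (hXmeas i) (cr_cube_meas p).compl] at h0
    rw [ae_iff]
    convert h0 using 2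
    rfl
  -- the functions on the product spaces
  set g2 : Fin n → Fin n → (Fin n → ℝ) → ℝ :=
    fun i j v => (2 * v i - 1) * (2 * v j - 1) with hg2
  set h2 : Fin p → Fin n → Fin n → (Fin n → EuclideanSpace ℝ (Fin p)) → ℝ :=
    fun k i j w => (w i k - c k) * (w j k - c k) with hh2
  have hg2meas : ∀ i j, Measurable (g2 i j) := fun i j =>
    (((measurable_pi_apply i).const_mul 2).sub measurable_const).mul
      (((measurable_pi_apply j).const_mul 2).sub measurable_const)
  have hh2meas : ∀ k i j, Measurable (h2 k i j) := fun k i j =>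
    (((hφmeas k).comp (measurable_pi_apply i)).sub measurable_const).mul
      (((hφmeas k).comp (measurable_pi_apply j)).sub measurable_const)
  have hcb : ∀ k, |c k| ≤ 1 := by
    intro k
    have h := norm_integral_le_of_norm_le_const (hbound1 k)
    rw [probReal_univ] at h
    simpa using h
  -- pointwise rewrite
  have hptrw : ∀ᵐ ω ∂P, ‖(2 / (n : ℝ)) • ∑ i, (2 * D i ω - 1) • X i ω‖ ^ 2
      = (2/(n:ℝ))^2 * ∑ k, ∑ i, ∑ j, g2 i j (DV ω) * h2 k i j (XV ω) := by
    filter_upwards [hDae, hXae] with ω hD hX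
    rw [norm_smul, mul_pow, Real.norm_eq_abs, sq_abs]
    congr 1
    rw [cr_normsq]
    refine Finset.sum_congr rfl fun k _ => ?_
    rw [cr_coord_sum]
    have hsub : ∑ i, (2 * D i ω - 1) * (X i ω k)
        = ∑ i, (2 * D i ω - 1) * (X i ω k - c k) := by
      have : ∑ i, (2 * D i ω - 1) * (X i ω k - c k)
          = (∑ i, (2 * D i ω - 1) * (X i ω k)) - (∑ i, (2 * D i ω - 1)) * c k := by
        rw [Finset.sum_mul, ← Finset.sum_sub_distrib]
        exact Finset.sum_congr rfl fun i _ => by ring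
      rw [this, hD.2]; ring
    rw [hsub, sq, Finset.sum_mul_sum]
    exact Finset.sum_congr rfl fun i _ => Finset.sum_congr rfl fun j _ => by
      simp only [hg2, hh2, hDV, hXV]; ring
  -- integrability of each term
  have hint3 : ∀ (k : Fin p) (i j : Fin n),
      Integrable (fun ω => g2 i j (DV ω) * h2 k i j (XV ω)) P := by
    intro k i j
    have hfact : (fun ω => g2 i j (DV ω) * h2 k i j (XV ω))
        = fun ω => ((2 * D i ω - 1) * (2 * D j ω - 1))
            * ((X i ω k - c k) * (X j ω k - c k)) := rfl
    rw [hfact]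
    have hm : Measurable (fun ω => ((2 * D i ω - 1) * (2 * D j ω - 1))
        * ((X i ω k - c k) * (X j ω k - c k))) := by
      apply Measurable.mul
      · exact (((hDmeas i).const_mul 2).sub measurable_const).mul
          (((hDmeas j).const_mul 2).sub measurable_const)
      · exact (((hφmeas k).comp (hXmeas i)).sub measurable_const).mul
          (((hφmeas k).comp (hXmeas j)).sub measurable_const)
    apply Integrable.mono' (integrable_const 4) hm.aestronglyMeasurable
    filter_upwards [hDae, hXae] with ω hD hX
    have hε : ∀ i', |2 * D i' ω - 1| ≤ 1 := by
      intro i'; rcases hD.1 i' with h | h <;> rw [h] <;> norm_num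
    have hZ : ∀ i', |X i' ω k - c k| ≤ 2 := by
      intro i'
      have h1 := (hX i' k).1
      have h2 := (hX i' k).2
      have := hcb k
      rw [abs_le] at this ⊢
      constructor <;> linarith
    rw [Real.norm_eq_abs, abs_mul, abs_mul, abs_mul]
    have e1 : |2 * D i ω - 1| * |2 * D j ω - 1| ≤ 1 := by
      nlinarith [hε i, hε j, abs_nonneg (2 * D i ω - 1), abs_nonneg (2 * D j ω - 1)]
    have e2 : |X i ω k - c k| * |X j ω k - c k| ≤ 4 := by
      nlinarith [hZ i, hZ j, abs_nonneg (X i ω k - c k), abs_nonneg (X j ω k - c k)]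
    nlinarith [e1, e2, abs_nonneg (2 * D i ω - 1), abs_nonneg (2 * D j ω - 1),
      mul_nonneg (abs_nonneg (2 * D i ω - 1)) (abs_nonneg (2 * D j ω - 1)),
      mul_nonneg (abs_nonneg (X i ω k - c k)) (abs_nonneg (X j ω k - c k))]
  -- diagonal terms
  have hdiag : ∀ (k : Fin p) (i : Fin n),
      ∫ ω, g2 i i (DV ω) * h2 k i i (XV ω) ∂P = V k := by
    intro k i
    have hae : ∀ᵐ ω ∂P, g2 i i (DV ω) * h2 k i i (XV ω) = (X i ω k - c k)^2 := by
      filter_upwards [hDae] with ω hD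
      have : g2 i i (DV ω) = 1 := by
        simp only [hg2, hDV]
        rcases hD.1 i with h | h <;> rw [h] <;> norm_num
      rw [this, one_mul]
      simp only [hh2, hXV]; ring
    rw [integral_congr_ae hae]
    have := integral_map (μ := P) (φ := X i) (hXmeas i).aemeasurable
      (f := fun x : EuclideanSpace ℝ (Fin p) => (x k - c k)^2)
      (((hφmeas k).sub measurable_const).pow measurable_const).aestronglyMeasurable
    rw [hXlaw i] at this
    exact this.symm
  -- off-diagonal terms vanish
  have hoff : ∀ (k : Fin p) (i j : Fin n), i ≠ j →
      ∫ ω, g2 i j (DV ω) * h2 k i j (XV ω) ∂P = 0 := by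
    intro k i j hij
    have hIndep : IndepFun (g2 i j ∘ DV) (h2 k i j ∘ XV) P :=
      hDX.comp (hg2meas i j) (hh2meas k i j)
    have hmul := hIndep.integral_mul_eq_mul_integral
      ((hg2meas i j).comp hDVmeas).aestronglyMeasurable
      ((hh2meas k i j).comp hXVmeas).aestronglyMeasurable
    have heq : (fun ω => g2 i j (DV ω) * h2 k i j (XV ω))
        = (g2 i j ∘ DV) * (h2 k i j ∘ XV) := rfl
    rw [heq, hmul]
    -- second factor is zero
    have hφ : Measurable (fun x : EuclideanSpace ℝ (Fin p) => x k - c k) :=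
      (hφmeas k).sub measurable_const
    have hfirst : ∀ i' : Fin n,
        integral P ((fun x : EuclideanSpace ℝ (Fin p) => x k - c k) ∘ X i') = 0 := by
      intro i'
      show ∫ ω, (X i' ω k - c k) ∂P = 0
      have hmap := integral_map (μ := P) (φ := X i') (hXmeas i').aemeasurable
        (f := fun x : EuclideanSpace ℝ (Fin p) => x k - c k) hφ.aestronglyMeasurable
      rw [hXlaw i'] at hmap
      rw [← hmap, integral_sub (hint1 k) (integrable_const _), integral_const]
      simp [measure_univ, hc]
    have hzero : integral P (h2 k i j ∘ XV) = 0 := by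
      have hXij : IndepFun (X i) (X j) P := hXindep.indepFun hij
      have hIndep2 : IndepFun
          ((fun x : EuclideanSpace ℝ (Fin p) => x k - c k) ∘ X i)
          ((fun x : EuclideanSpace ℝ (Fin p) => x k - c k) ∘ X j) P :=
        hXij.comp hφ hφ
      have hmul2 := hIndep2.integral_mul_eq_mul_integral
        (hφ.comp (hXmeas i)).aestronglyMeasurable
        (hφ.comp (hXmeas j)).aestronglyMeasurable
      have heq2 : h2 k i j ∘ XV
          = ((fun x : EuclideanSpace ℝ (Fin p) => x k - c k) ∘ X i)
            * ((fun x : EuclideanSpace ℝ (Fin p) => x k - c k) ∘ X j) := rfl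
      rw [heq2, hmul2, hfirst i, zero_mul]
    rw [hzero, mul_zero]
  -- main identity
  have key : ∫ ω, ‖(2 / (n : ℝ)) • ∑ i, (2 * D i ω - 1) • X i ω‖ ^ 2 ∂P
      = (2/(n:ℝ))^2 * ((n : ℝ) * ∑ k, V k) := by
    rw [integral_congr_ae hptrw, integral_const_mul]
    congr 1
    rw [integral_finset_sum _ (fun k _ => integrable_finset_sum _
      (fun i _ => integrable_finset_sum _ (fun j _ => hint3 k i j)))]
    have hkk : ∀ k : Fin p, (∫ ω, ∑ i, ∑ j, g2 i j (DV ω) * h2 k i j (XV ω) ∂P)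
        = (n : ℝ) * V k := by
      intro k
      rw [integral_finset_sum _ (fun i _ => integrable_finset_sum _ (fun j _ => hint3 k i j))]
      have : ∀ i : Fin n, (∫ ω, ∑ j, g2 i j (DV ω) * h2 k i j (XV ω) ∂P) = V k := by
        intro i
        rw [integral_finset_sum _ (fun j _ => hint3 k i j)]
        rw [Finset.sum_eq_single i]
        · exact hdiag k i
        · intro j _ hji
          exact hoff k i j (fun h => hji h.symm)
        · intro h; exact absurd (Finset.mem_univ i) h
      rw [Finset.sum_congr rfl (fun i _ => this i)]
      simp [Finset.sum_const, Finset.card_univ, mul_comm]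
    rw [Finset.sum_congr rfl (fun k _ => hkk k), ← Finset.mul_sum]
  -- conclude
  have npos : (0:ℝ) < n := by exact_mod_cast hn
  have hslb : (p : ℝ) * (Clo / 12) ≤ ∑ k, V k := by
    calc (p : ℝ) * (Clo / 12) = ∑ _k : Fin p, Clo / 12 := by
          rw [Finset.sum_const, Finset.card_univ, Fintype.card_fin, nsmul_eq_mul]
      _ ≤ ∑ k, V k := Finset.sum_le_sum (fun k _ => hVlb k)
  have hsub : ∑ k, V k ≤ (p : ℝ) * (Chi / 12) := by
    calc ∑ k, V k ≤ ∑ _k : Fin p, Chi / 12 := Finset.sum_le_sum (fun k _ => hVub k)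
      _ = (p : ℝ) * (Chi / 12) := by
          rw [Finset.sum_const, Finset.card_univ, Fintype.card_fin, nsmul_eq_mul]
  have heval : (2/(n:ℝ))^2 * ((n : ℝ) * ∑ k, V k) = 4 * (∑ k, V k) / n := by
    field_simp
    ring
  constructor
  · rw [key, heval]
    have e : Clo / 3 * ((p:ℝ)/n) = 4 * ((p:ℝ) * (Clo/12)) / n := by ring
    rw [e]
    gcongr
  · rw [key, heval]
    have e : Chi / 3 * ((p:ℝ)/n) = 4 * ((p:ℝ) * (Chi/12)) / n := by ring
    rw [e]
    gcongr
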